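/- The softmax function on ℝ^L is Lipschitz: there exists a constant C (one may take C = 2) such that for all s, t ∈ ℝ^L, ‖softmax(s) − softmax(t)‖ ≤ C ‖s − t‖. -/

import Mathlib

open scoped RealInnerProductSpace

/-- The softmax map on `ℝ^L` (with the Euclidean norm). -/
noncomputable def smax (L : ℕ) (s : EuclideanSpace ℝ (Fin L)) : EuclideanSpace ℝ (Fin L) :=
  WithLp.toLp 2 (fun j => Real.exp (s j) / ∑ l, Real.exp (s l))

open ContinuousLinearMap in
/-- The Jacobian of softmax, as a map on the plain pi type. -/
noncomputable def smaxDerivPi (L : ℕ) (x : Fin L → ℝ) : (Fin L → ℝ) →L[ℝ] (Fin L → ℝ) :=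
  ContinuousLinearMap.pi fun j =>
    (Real.exp (x j) / ∑ l, Real.exp (x l)) •
      (ContinuousLinearMap.proj j -
        ∑ l, (Real.exp (x l) / ∑ m, Real.exp (x m)) • ContinuousLinearMap.proj (R := ℝ) l)

lemma smaxDerivPi_apply (L : ℕ) (x v : Fin L → ℝ) (j : Fin L) :
    smaxDerivPi L x v j = (Real.exp (x j) / ∑ l, Real.exp (x l)) *
      (v j - ∑ l, (Real.exp (x l) / ∑ m, Real.exp (x m)) * v l) := by
  simp [smaxDerivPi]

lemma gPi_hasFDerivAt (L : ℕ) [Nonempty (Fin L)] (x : Fin L → ℝ) :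
    HasFDerivAt (fun y : Fin L → ℝ => fun j => Real.exp (y j) / ∑ l, Real.exp (y l))
      (smaxDerivPi L x) x := by
  have hS0 : (∑ l, Real.exp (x l)) ≠ 0 := by positivity
  apply hasFDerivAt_pi''
  intro j
  have hexp : ∀ l : Fin L, HasFDerivAt (fun y : Fin L → ℝ => Real.exp (y l))
      (Real.exp (x l) • ContinuousLinearMap.proj (R := ℝ) (φ := fun _ : Fin L => ℝ) l) x := by
    intro l
    have h0 : HasFDerivAt (fun y : Fin L → ℝ => y l)
        (ContinuousLinearMap.proj (R := ℝ) (φ := fun _ : Fin L => ℝ) l) x := hasFDerivAt_apply l x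
    exact (Real.hasDerivAt_exp (x l)).comp_hasFDerivAt x h0
  have hj := hexp j
  have hS : HasFDerivAt (fun y : Fin L → ℝ => ∑ l, Real.exp (y l))
      (∑ l, Real.exp (x l) • ContinuousLinearMap.proj (R := ℝ) l) x :=
    HasFDerivAt.fun_sum fun l _ => hexp l
  have hinv : HasFDerivAt (fun y : Fin L → ℝ => (∑ l, Real.exp (y l))⁻¹)
      ((-(((∑ l, Real.exp (x l)) ^ 2)⁻¹)) •
        (∑ l, Real.exp (x l) • ContinuousLinearMap.proj (R := ℝ) l)) x :=
    (hasDerivAt_inv hS0).comp_hasFDerivAt x hS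
  have hmul := hj.mul hinv
  have heq : (fun y : Fin L → ℝ => Real.exp (y j) / ∑ l, Real.exp (y l)) =
      fun y : Fin L → ℝ => Real.exp (y j) * (∑ l, Real.exp (y l))⁻¹ := by
    funext y; rw [div_eq_mul_inv]
  rw [heq]
  convert hmul using 1
  · rfl
  · rfl
  ext v
  have h1 : ∑ l, (Real.exp (x l) / ∑ m, Real.exp (x m)) * v l
      = (∑ l, Real.exp (x l) * v l) / ∑ m, Real.exp (x m) := by
    rw [Finset.sum_div]
    exact Finset.sum_congr rfl fun l _ => by ring
  simp only [ContinuousLinearMap.coe_comp', Function.comp_apply,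
    ContinuousLinearMap.proj_apply, ContinuousLinearMap.add_apply,
    ContinuousLinearMap.smul_apply, ContinuousLinearMap.coe_sum',
    Finset.sum_apply, smul_eq_mul]
  rw [smaxDerivPi_apply, h1]
  field_simp
  ring

noncomputable def smaxDerivE (L : ℕ) (x : EuclideanSpace ℝ (Fin L)) :
    EuclideanSpace ℝ (Fin L) →L[ℝ] EuclideanSpace ℝ (Fin L) :=
  ((PiLp.continuousLinearEquiv 2 ℝ (fun _ : Fin L => ℝ)).symm.toContinuousLinearMap).comp
    ((smaxDerivPi L ((PiLp.continuousLinearEquiv 2 ℝ (fun _ : Fin L => ℝ)) x)).comp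
      (PiLp.continuousLinearEquiv 2 ℝ (fun _ : Fin L => ℝ)).toContinuousLinearMap)

lemma smaxDerivE_apply (L : ℕ) (x v : EuclideanSpace ℝ (Fin L)) (j : Fin L) :
    smaxDerivE L x v j = (Real.exp (x j) / ∑ l, Real.exp (x l)) *
      (v j - ∑ l, (Real.exp (x l) / ∑ m, Real.exp (x m)) * v l) := by
  simp [smaxDerivE, smaxDerivPi_apply]

lemma smaxDerivE_norm_le (L : ℕ) [Nonempty (Fin L)] (x : EuclideanSpace ℝ (Fin L)) :
    ‖smaxDerivE L x‖ ≤ 2 := by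
  have hS0 : (0 : ℝ) < ∑ l, Real.exp (x l) := by positivity
  set q : EuclideanSpace ℝ (Fin L) := WithLp.toLp 2 (fun l => Real.exp (x l) / ∑ m, Real.exp (x m)) with hq
  have hq0 : ∀ l, 0 ≤ q l := fun l => by positivity
  have hq1 : ∀ l, q l ≤ 1 := by
    intro l
    rw [hq]
    exact div_le_one_of_le₀ (Finset.single_le_sum (f := fun m => Real.exp (x m))
      (fun m _ => (Real.exp_pos _).le) (Finset.mem_univ l)) hS0.le
  have hqsum : ∑ l, q l = 1 := by
    simp only [hq]
    rw [← Finset.sum_div, div_self hS0.ne']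
  have hqnorm : ‖q‖ ≤ 1 := by
    rw [EuclideanSpace.norm_eq]
    have : ∑ l, ‖q l‖ ^ 2 ≤ 1 := by
      calc ∑ l, ‖q l‖ ^ 2 ≤ ∑ l, q l := by
            apply Finset.sum_le_sum
            intro l _
            rw [Real.norm_eq_abs, abs_of_nonneg (hq0 l), sq]
            exact mul_le_of_le_one_left (hq0 l) (hq1 l)
        _ = 1 := hqsum
    calc Real.sqrt (∑ l, ‖q l‖ ^ 2) ≤ Real.sqrt 1 := Real.sqrt_le_sqrt this
      _ = 1 := Real.sqrt_one
  apply ContinuousLinearMap.opNorm_le_bound _ (by norm_num)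
  intro v
  set w1 : EuclideanSpace ℝ (Fin L) := WithLp.toLp 2 (fun j => q j * v j) with hw1
  set c : ℝ := ∑ l, q l * v l with hc
  have hdecomp : smaxDerivE L x v = w1 - c • q := by
    ext j
    have := smaxDerivE_apply L x v j
    simp only [PiLp.sub_apply, PiLp.smul_apply, smul_eq_mul, hw1, hc, hq, PiLp.toLp_apply]
    rw [this]
    rw [Finset.sum_mul]
    ring_nf
    rw [Finset.mul_sum]
    congr 1
    apply Finset.sum_congr rfl
    intro l _
    ring
  have hw1norm : ‖w1‖ ≤ ‖v‖ := by
    rw [EuclideanSpace.norm_eq, EuclideanSpace.norm_eq]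
    apply Real.sqrt_le_sqrt
    apply Finset.sum_le_sum
    intro l _
    simp only [hw1, Real.norm_eq_abs, sq_abs, mul_pow]
    have h2 : q l ^ 2 ≤ 1 := by nlinarith [hq0 l, hq1 l]
    exact mul_le_of_le_one_left (sq_nonneg (v l)) h2
  have hcle : |c| ≤ ‖v‖ := by
    have hinner : c = ⟪q, v⟫ := by
      rw [hc, PiLp.inner_apply]
      exact Finset.sum_congr rfl fun l _ => by simp [RCLike.inner_apply, mul_comm]
    rw [hinner]
    calc |⟪q, v⟫| ≤ ‖q‖ * ‖v‖ := abs_real_inner_le_norm q v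
      _ ≤ 1 * ‖v‖ := mul_le_mul_of_nonneg_right hqnorm (norm_nonneg v)
      _ = ‖v‖ := one_mul _
  calc ‖smaxDerivE L x v‖ = ‖w1 - c • q‖ := by rw [hdecomp]
    _ ≤ ‖w1‖ + ‖c • q‖ := norm_sub_le _ _
    _ ≤ ‖v‖ + |c| * ‖q‖ := by
        rw [norm_smul, Real.norm_eq_abs]
        exact add_le_add hw1norm le_rfl
    _ ≤ ‖v‖ + ‖v‖ * 1 := by
        apply add_le_add le_rfl
        exact mul_le_mul hcle hqnorm (norm_nonneg q) (norm_nonneg v)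
    _ = 2 * ‖v‖ := by ring

lemma smax_hasFDerivAt (L : ℕ) [Nonempty (Fin L)] (x : EuclideanSpace ℝ (Fin L)) :
    HasFDerivAt (smax L) (smaxDerivE L x) x := by
  set E := PiLp.continuousLinearEquiv 2 ℝ (fun _ : Fin L => ℝ) with hE
  have hEd : HasFDerivAt (⇑E) (E.toContinuousLinearMap) x := E.hasFDerivAt
  have hg := gPi_hasFDerivAt L (E x)
  have hEs : HasFDerivAt (⇑E.symm) (E.symm.toContinuousLinearMap)
      ((fun y : Fin L → ℝ => fun j => Real.exp (y j) / ∑ l, Real.exp (y l)) (E x)) :=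
    E.symm.hasFDerivAt
  have h := hEs.comp x (hg.comp x hEd)
  exact h

/-- the softmax function is Lipschitz with constant `C = 2` in the
Euclidean norm. -/
theorem stmt11 (L : ℕ) (s t : EuclideanSpace ℝ (Fin L)) :
    ‖smax L s - smax L t‖ ≤ 2 * ‖s - t‖ := by
  rcases Nat.eq_zero_or_pos L with hL | hL
  · subst hL
    rw [EuclideanSpace.norm_eq, EuclideanSpace.norm_eq]
    simp
  · haveI : Nonempty (Fin L) := ⟨⟨0, hL⟩⟩
    exact (convex_univ).norm_image_sub_le_of_norm_hasFDerivWithin_le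
      (fun x _ => (smax_hasFDerivAt L x).hasFDerivWithinAt)
      (fun x _ => smaxDerivE_norm_le L x) (Set.mem_univ t) (Set.mem_univ s)
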